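/- arXiv:1604.03306 — 4 statements merged into one kernel-verified Lean document; each statement's English description precedes it below -/
import Mathlib

section
/- Let A be an m×n real matrix, x ∈ ℝⁿ, and let W ⊆ {1,…,n} be a nonempty index set. Let S > 0 and C > 0 be real numbers and let t = (√(S+1)−1)/√S or t = −(√(S+1)−1)/√S. For each i ∈ W define tᵢ = −(C/2)(1−t²) if ⟨Ax, Aeᵢ⟩ ≥ 0 and tᵢ = +(C/2)(1−t²) if ⟨Ax, Aeᵢ⟩ < 0, where eᵢ ∈ ℝⁿ is the i-th standard basis vector. Then t² < 1 and ‖A(x + Σ_{i∈W} tᵢ eᵢ)‖₂² − ‖A(t²x − Σ_{i∈W} tᵢ eᵢ)‖₂² = (1−t⁴)(⟨Ax, Ax⟩ − C Σ_{i∈W} |⟨Ax, Aeᵢ⟩|). -/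
open scoped InnerProductSpace BigOperators

/-- Regard a plain vector in `Fin m → ℝ` as an element of Euclidean space
(so that `‖·‖` is the Euclidean norm and `⟪·,·⟫_ℝ` the Euclidean inner product). -/
noncomputable def toE {m : ℕ} (v : Fin m → ℝ) : EuclideanSpace ℝ (Fin m) := WithLp.toLp 2 v

/-- The `j`-th column of the matrix `A`, viewed as a vector in Euclidean space. -/
noncomputable def col {m n : ℕ} (A : Matrix (Fin m) (Fin n) ℝ) (j : Fin n) :
    EuclideanSpace ℝ (Fin m) := WithLp.toLp 2 (fun i => A i j)

/-- Lemma 2 of Chen–Ge: for `S, C > 0`, `t = ±(√(S+1)−1)/√S`, and signs `tᵢ`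
chosen according to the sign of `⟨Ax, Aeᵢ⟩`, one has `t² < 1` and the stated
identity for the difference of the two squared norms. -/
theorem stmt0 {m n : ℕ} (A : Matrix (Fin m) (Fin n) ℝ) (x : Fin n → ℝ)
    (W : Finset (Fin n)) (hWne : W.Nonempty)
    (S C t : ℝ) (hS : 0 < S) (hC : 0 < C)
    (ht : t = (Real.sqrt (S + 1) - 1) / Real.sqrt S ∨
          t = -((Real.sqrt (S + 1) - 1) / Real.sqrt S))
    (tc : Fin n → ℝ)
    (htc : ∀ i ∈ W,
      tc i = if 0 ≤ ⟪toE (A.mulVec x), col A i⟫_ℝ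
             then -(C / 2) * (1 - t ^ 2) else (C / 2) * (1 - t ^ 2)) :
    t ^ 2 < 1 ∧
    ‖toE (A.mulVec (x + ∑ i ∈ W, tc i • (Pi.single i 1 : Fin n → ℝ)))‖ ^ 2
      - ‖toE (A.mulVec (t ^ 2 • x - ∑ i ∈ W, tc i • (Pi.single i 1 : Fin n → ℝ)))‖ ^ 2
    = (1 - t ^ 4) * (⟪toE (A.mulVec x), toE (A.mulVec x)⟫_ℝ
        - C * ∑ i ∈ W, |⟪toE (A.mulVec x), col A i⟫_ℝ|) := by
  have hSnn : (0:ℝ) ≤ S := hS.le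
  have hs : Real.sqrt S ^ 2 = S := Real.sq_sqrt hSnn
  have hs1 : Real.sqrt (S + 1) ^ 2 = S + 1 := Real.sq_sqrt (by linarith)
  have hspos : 0 < Real.sqrt S := Real.sqrt_pos.mpr hS
  have ha : 1 < Real.sqrt (S + 1) := by
    nlinarith [Real.sqrt_nonneg (S + 1)]
  have ht2 : t ^ 2 < 1 := by
    have h : ((Real.sqrt (S + 1) - 1) / Real.sqrt S) ^ 2 < 1 := by
      rw [div_pow, div_lt_one (by positivity)]
      nlinarith
    rcases ht with h' | h' <;> rw [h']
    · exact h
    · simpa using h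
  refine ⟨ht2, ?_⟩
  set u := toE (A.mulVec x) with hu
  set w : EuclideanSpace ℝ (Fin m) := ∑ i ∈ W, tc i • col A i with hw
  have hsum : A.mulVec (∑ i ∈ W, tc i • (Pi.single i 1 : Fin n → ℝ)) = w := by
    rw [hw]
    rw [show A.mulVec (∑ i ∈ W, tc i • (Pi.single i 1 : Fin n → ℝ))
        = ∑ i ∈ W, tc i • A.mulVec (Pi.single i 1) from by
      simp only [Matrix.mulVec_sum, Matrix.mulVec_smul]]
    rw [WithLp.ofLp_sum]
    apply Finset.sum_congr rfl
    intro i _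
    rw [WithLp.ofLp_smul]
    congr 1
    funext j
    simp [Matrix.mulVec_single, col]
  have h1 : toE (A.mulVec (x + ∑ i ∈ W, tc i • (Pi.single i 1 : Fin n → ℝ)))
      = u + w := by
    show WithLp.toLp 2 (A.mulVec _) = _
    rw [Matrix.mulVec_add, hsum]; rfl
  have h2 : toE (A.mulVec (t ^ 2 • x - ∑ i ∈ W, tc i • (Pi.single i 1 : Fin n → ℝ)))
      = t ^ 2 • u - w := by
    show WithLp.toLp 2 (A.mulVec _) = _
    rw [Matrix.mulVec_sub, Matrix.mulVec_smul, hsum]; rfl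
  have hinner : ⟪u, w⟫_ℝ = -(C / 2) * (1 - t ^ 2) * ∑ i ∈ W, |⟪u, col A i⟫_ℝ| := by
    rw [hw, inner_sum, Finset.mul_sum]
    apply Finset.sum_congr rfl
    intro i hi
    rw [real_inner_smul_right, htc i hi]
    by_cases h : 0 ≤ ⟪u, col A i⟫_ℝ
    · rw [if_pos h, abs_of_nonneg h]
    · rw [if_neg h, abs_of_neg (lt_of_not_ge h)]; ring
  rw [h1, h2, norm_add_sq_real, norm_sub_sq_real, real_inner_smul_left, norm_smul,
    hinner]
  simp only [Real.norm_eq_abs, mul_pow, sq_abs, ← real_inner_self_eq_norm_sq]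
  ring
end

section
/- Let K, N ≥ 1 be integers and let A be an m×n real matrix satisfying the restricted isometry property of order K+N with constant δ, where δ < 1/√(K/N + 1). Let x ∈ ℝⁿ be a nonzero vector whose support T satisfies 1 ≤ |T| ≤ K. Then for every set W ⊆ {1,…,n} with |W| = N and W ∩ T = ∅, one has max_{i∈T} |⟨Aeᵢ, Ax⟩| > min_{i∈W} |⟨Aeᵢ, Ax⟩|. (Consequently, among the N indices i for which |⟨Aeᵢ, Ax⟩| is largest, at least one belongs to T; i.e., the first iteration of generalized orthogonal matching pursuit selects at least one correct index.) -/
set_option maxHeartbeats 800000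


open scoped InnerProductSpace BigOperators

/-- The number of nonzero entries of a vector. -/
noncomputable def sparsity {n : ℕ} (z : Fin n → ℝ) : ℕ :=
  (Finset.univ.filter (fun i => z i ≠ 0)).card

/-- `A` satisfies the restricted isometry property of order `s` with constant `δ`:
`(1−δ)‖z‖₂² ≤ ‖Az‖₂² ≤ (1+δ)‖z‖₂²` for every vector `z` with at most `s` nonzero entries. -/
def RIP {m n : ℕ} (A : Matrix (Fin m) (Fin n) ℝ) (s : ℕ) (δ : ℝ) : Prop :=
  ∀ z : Fin n → ℝ, sparsity z ≤ s →
    (1 - δ) * ‖toE z‖ ^ 2 ≤ ‖toE (A.mulVec z)‖ ^ 2 ∧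
    ‖toE (A.mulVec z)‖ ^ 2 ≤ (1 + δ) * ‖toE z‖ ^ 2

lemma inner_toE {m : ℕ} (u v : Fin m → ℝ) :
    ⟪toE u, toE v⟫_ℝ = ∑ j, u j * v j := by
  simp [toE, PiLp.inner_apply, RCLike.inner_apply, mul_comm]

lemma norm_toE_sq {m : ℕ} (v : Fin m → ℝ) : ‖toE v‖ ^ 2 = ∑ j, v j ^ 2 := by
  rw [← real_inner_self_eq_norm_sq, inner_toE]
  simp [sq]

lemma mulVec_inner {m n : ℕ} (A : Matrix (Fin m) (Fin n) ℝ) (z : Fin n → ℝ) (v : Fin m → ℝ) :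
    ⟪toE (A.mulVec z), toE v⟫_ℝ = ∑ i, z i * ⟪col A i, toE v⟫_ℝ := by
  have hcol : ∀ i, ⟪col A i, toE v⟫_ℝ = ∑ j, A j i * v j := fun i =>
    inner_toE (fun r => A r i) v
  rw [inner_toE]
  simp_rw [hcol, Matrix.mulVec, dotProduct, Finset.sum_mul, Finset.mul_sum]
  rw [Finset.sum_comm]
  exact Finset.sum_congr rfl fun i _ => Finset.sum_congr rfl fun j _ => by ring

lemma sparsity_le_of_subset {n : ℕ} {z : Fin n → ℝ} {s : Finset (Fin n)}
    (h : ∀ i, z i ≠ 0 → i ∈ s) : sparsity z ≤ s.card :=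
  Finset.card_le_card fun i hi => h i (Finset.mem_filter.mp hi).2

lemma gomp_final_arith (K N X P Q θ α δ : ℝ) (hK : 1 ≤ K) (hN : 1 ≤ N) (hX : 0 < X)
    (hδ0 : 0 ≤ δ) (hδKN : δ ^ 2 * (K + N) < N)
    (hθ1 : θ ^ 2 ≤ (P - (1 - δ) * X) * (Q - (1 - δ) * N))
    (hθ2 : θ ^ 2 ≤ ((1 + δ) * X - P) * ((1 + δ) * N - Q))
    (ha1 : 0 ≤ P - (1 - δ) * X) (ha2 : 0 ≤ (1 + δ) * X - P)
    (hd1 : 0 ≤ Q - (1 - δ) * N) (hd2 : 0 ≤ (1 + δ) * N - Q)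
    (hα0 : 0 ≤ α) (hP2 : P ^ 2 ≤ K * X * α ^ 2)
    (hθ2N : N ^ 2 * α ^ 2 ≤ θ ^ 2) : False := by
  have hKr : (0:ℝ) < K := lt_of_lt_of_le one_pos hK
  have hNr : (0:ℝ) < N := lt_of_lt_of_le one_pos hN
  rcases eq_or_lt_of_le hδ0 with hδeq | hδpos
  · subst hδeq
    have hPX1 : P ≤ X := by linarith
    have hPX2 : X ≤ P := by linarith
    have hθz : θ ^ 2 ≤ 0 := by
      nlinarith [hθ1, mul_nonneg (by linarith : (0:ℝ) ≤ X - P) hd1]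
    have hαz : α ^ 2 ≤ 0 := by
      nlinarith [hθ2N, hθz, mul_nonneg (mul_nonneg
        (by linarith : (0:ℝ) ≤ N - 1) (by linarith : (0:ℝ) ≤ N + 1)) (sq_nonneg α)]
    have hKXα : K * X * α ^ 2 ≤ 0 :=
      mul_nonpos_of_nonneg_of_nonpos (mul_nonneg hKr.le hX.le) hαz
    have hPpos : 0 < P := lt_of_lt_of_le hX hPX2
    nlinarith [hP2, hKXα, mul_pos hPpos hPpos]
  · have e1 := mul_le_mul_of_nonneg_right hθ1 ha2
    have e2 := mul_le_mul_of_nonneg_right hθ2 ha1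
    have key : θ ^ 2 * (2 * δ * X) ≤
        (P - (1 - δ) * X) * ((1 + δ) * X - P) * (2 * δ * N) := by nlinarith [e1, e2]
    have hXθ : θ ^ 2 * X ≤ (P - (1 - δ) * X) * ((1 + δ) * X - P) * N := by
      have h2δ : 0 < 2 * δ := by linarith
      have key' : (θ ^ 2 * X) * (2 * δ) ≤
          ((P - (1 - δ) * X) * ((1 + δ) * X - P) * N) * (2 * δ) := by linarith [key]
      exact le_of_mul_le_mul_right key' h2δ
    have hNP : N ^ 2 * P ^ 2 ≤ K * X * θ ^ 2 := by
      have h1 := mul_le_mul_of_nonneg_left hP2 (sq_nonneg N)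
      have h2 := mul_le_mul_of_nonneg_left hθ2N (mul_nonneg hKr.le hX.le)
      nlinarith [h1, h2]
    have h5 : (N * P ^ 2) * (N * X) ≤
        (K * ((P - (1 - δ) * X) * ((1 + δ) * X - P))) * (N * X) := by
      nlinarith [hNP, mul_le_mul_of_nonneg_left hXθ hKr.le]
    have hNX : 0 < N * X := mul_pos hNr hX
    have h6 : N * P ^ 2 ≤ K * ((P - (1 - δ) * X) * ((1 + δ) * X - P)) :=
      le_of_mul_le_mul_right h5 hNX
    have hE : (K + N) * P ^ 2 - 2 * K * X * P + K * (1 - δ ^ 2) * X ^ 2 ≤ 0 := by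
      nlinarith [h6]
    have hpos : 0 < K * X ^ 2 * (N - (K + N) * δ ^ 2) := by
      apply mul_pos (mul_pos hKr (by positivity))
      nlinarith [hδKN]
    have hKN0 : (0:ℝ) ≤ K + N := by positivity
    nlinarith [mul_nonpos_of_nonneg_of_nonpos hKN0 hE, hpos,
      sq_nonneg ((K + N) * P - K * X)]


/-- Theorem 1 of Chen–Ge (first iteration of gOMP succeeds): if `A` satisfies the RIP of
order `K+N` with constant `δ < 1/√(K/N + 1)` and `x` is a nonzero `K`-sparse vector with
support `T`, then for any `W` of size `N` disjoint from `T`,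
`max_{i∈T} |⟨Aeᵢ, Ax⟩| > min_{i∈W} |⟨Aeᵢ, Ax⟩|`. -/
theorem stmt3 {m n : ℕ} (K N : ℕ) (hK : 1 ≤ K) (hN : 1 ≤ N)
    (A : Matrix (Fin m) (Fin n) ℝ) (δ : ℝ)
    (hδ : δ < 1 / Real.sqrt ((K : ℝ) / N + 1))
    (hRIP : RIP A (K + N) δ)
    (x : Fin n → ℝ) (T : Finset (Fin n)) (hT : ∀ i, i ∈ T ↔ x i ≠ 0)
    (hTne : T.Nonempty) (hTK : T.card ≤ K)
    (W : Finset (Fin n)) (hWcard : W.card = N) (hWne : W.Nonempty)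
    (hWT : Disjoint W T) :
    W.inf' hWne (fun i => |⟪col A i, toE (A.mulVec x)⟫_ℝ|)
      < T.sup' hTne (fun i => |⟪col A i, toE (A.mulVec x)⟫_ℝ|) := by
  classical
  obtain ⟨C, hC⟩ : ∃ C : Fin n → ℝ, C = fun i => ⟪col A i, toE (A.mulVec x)⟫_ℝ := ⟨_, rfl⟩
  have hCi : ∀ i, C i = ⟪col A i, toE (A.mulVec x)⟫_ℝ := fun i => by rw [hC]
  have hgoal : (fun i => |⟪col A i, toE (A.mulVec x)⟫_ℝ|) = fun i => |C i| := by
    funext i; rw [hCi]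
  rw [hgoal]
  by_contra hcon
  rw [not_lt] at hcon
  set α := T.sup' hTne (fun i => |C i|) with hα
  set β := W.inf' hWne (fun i => |C i|) with hβ
  -- basic casts
  have hNr : (0:ℝ) < (N:ℝ) := by exact_mod_cast Nat.lt_of_lt_of_le Nat.zero_lt_one hN
  have hKr : (0:ℝ) < (K:ℝ) := by exact_mod_cast Nat.lt_of_lt_of_le Nat.zero_lt_one hK
  -- X
  set X := ∑ i, x i ^ 2 with hXdef
  have hX : 0 < X := by
    obtain ⟨i₀, hi₀⟩ := hTne
    have hx0 : x i₀ ≠ 0 := (hT i₀).mp hi₀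
    have h1 : x i₀ ^ 2 ≤ X := Finset.single_le_sum (fun i _ => sq_nonneg (x i))
      (Finset.mem_univ i₀)
    have : 0 < x i₀ ^ 2 := by positivity
    linarith
  -- RIP on x
  set P := ‖toE (A.mulVec x)‖ ^ 2 with hPdef
  have hxsp : sparsity x ≤ K + N := by
    refine le_trans (sparsity_le_of_subset (fun i hi => (hT i).mpr hi)) ?_
    omega
  have hRx : (1 - δ) * X ≤ P ∧ P ≤ (1 + δ) * X := by
    have := hRIP x hxsp
    rwa [norm_toE_sq, ← hXdef, ← hPdef] at this
  have hδ0 : 0 ≤ δ := by nlinarith [hRx.1, hRx.2, hX]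
  -- δ² (K+N) < N
  have hδKN : δ ^ 2 * ((K:ℝ) + (N:ℝ)) < (N:ℝ) := by
    have hargpos : (0:ℝ) < (K:ℝ)/N + 1 := by positivity
    have hs0 : 0 < Real.sqrt ((K:ℝ)/N + 1) := Real.sqrt_pos.mpr hargpos
    have hds : δ * Real.sqrt ((K:ℝ)/N + 1) < 1 := (lt_div_iff₀ hs0).mp hδ
    have hsq : (Real.sqrt ((K:ℝ)/N + 1)) ^ 2 = (K:ℝ)/N + 1 := Real.sq_sqrt hargpos.le
    have h1 : δ ^ 2 * ((K:ℝ)/N + 1) < 1 := by nlinarith [mul_nonneg hδ0 hs0.le]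
    have hfield : ((K:ℝ)/N + 1) * N = (K:ℝ) + N := by field_simp
    calc δ ^ 2 * ((K:ℝ) + (N:ℝ)) = (δ ^ 2 * ((K:ℝ)/(N:ℝ) + 1)) * (N:ℝ) := by
          rw [← hfield]; ring
      _ < 1 * (N:ℝ) := mul_lt_mul_of_pos_right h1 hNr
      _ = (N:ℝ) := one_mul _
  -- the sign vector on W
  set zs : Fin n → ℝ := fun i => if i ∈ W then (if 0 ≤ C i then (1:ℝ) else -1) else 0 with hzs
  have hzs_sq : ∀ i, zs i ^ 2 = if i ∈ W then (1:ℝ) else 0 := by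
    intro i
    by_cases hiW : i ∈ W
    · by_cases hs : 0 ≤ C i <;> simp [hzs, hiW, hs]
    · simp [hzs, hiW]
  have hzsN : ∑ i, zs i ^ 2 = (N:ℝ) := by
    simp_rw [hzs_sq]
    rw [Finset.sum_ite_mem, Finset.univ_inter, Finset.sum_const, hWcard]
    simp
  have hxzs : ∀ i, x i * zs i = 0 := by
    intro i
    by_cases hiW : i ∈ W
    · have hiT : i ∉ T := Finset.disjoint_left.mp hWT hiW
      have : x i = 0 := by
        by_contra h; exact hiT ((hT i).mpr h)
      simp [this]
    · simp [hzs, hiW]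
  have hzsC : ∀ i ∈ W, zs i * C i = |C i| := by
    intro i hiW
    by_cases hs : 0 ≤ C i
    · simp [hzs, hiW, hs, abs_of_nonneg hs]
    · push_neg at hs
      simp [hzs, hiW, not_le.mpr hs, abs_of_neg hs]
  -- θ and Q
  set θ := ⟪toE (A.mulVec zs), toE (A.mulVec x)⟫_ℝ with hθdef
  have hθ : θ = ∑ i ∈ W, |C i| := by
    rw [hθdef, mulVec_inner]
    simp_rw [← hCi]
    rw [← Finset.sum_subset (Finset.subset_univ W) (fun i _ hi => by simp [hzs, hi])]
    exact Finset.sum_congr rfl hzsC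
  have hθβ : (N:ℝ) * β ≤ θ := by
    rw [hθ]
    calc (N:ℝ) * β = W.card • β := by rw [hWcard]; simp [nsmul_eq_mul]
      _ = ∑ _i ∈ W, β := by rw [Finset.sum_const]
      _ ≤ ∑ i ∈ W, |C i| := Finset.sum_le_sum fun i hi => Finset.inf'_le _ hi
  set Q := ‖toE (A.mulVec zs)‖ ^ 2 with hQdef
  have hzssp : sparsity zs ≤ K + N := by
    refine le_trans (sparsity_le_of_subset (s := W) (fun i hi => ?_)) (by omega)
    by_contra hiW
    exact hi (by simp [hzs, hiW])
  have hRzs : (1 - δ) * (N:ℝ) ≤ Q ∧ Q ≤ (1 + δ) * (N:ℝ) := by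
    have := hRIP zs hzssp
    rwa [norm_toE_sq, hzsN, ← hQdef] at this
  -- RIP on t • x + zs
  have hquad : ∀ t : ℝ,
      (1 - δ) * (t ^ 2 * X + N) ≤ t ^ 2 * P + 2 * t * θ + Q ∧
      t ^ 2 * P + 2 * t * θ + Q ≤ (1 + δ) * (t ^ 2 * X + N) := by
    intro t
    set z : Fin n → ℝ := fun i => t * x i + zs i with hz
    have hzsp : sparsity z ≤ K + N := by
      refine le_trans (sparsity_le_of_subset (s := T ∪ W) (fun i hi => ?_)) ?_
      · by_contra hmem
        rw [Finset.mem_union] at hmem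
        push_neg at hmem
        have hx0 : x i = 0 := by
          by_contra h; exact hmem.1 ((hT i).mpr h)
        have hzs0 : zs i = 0 := by simp [hzs, hmem.2]
        exact hi (by simp [hz, hx0, hzs0])
      · calc (T ∪ W).card ≤ T.card + W.card := Finset.card_union_le _ _
          _ ≤ K + N := by rw [hWcard]; omega
    have hnin : ‖toE z‖ ^ 2 = t ^ 2 * X + N := by
      rw [norm_toE_sq]
      have : ∀ i, z i ^ 2 = t ^ 2 * x i ^ 2 + 2 * t * (x i * zs i) + zs i ^ 2 := by
        intro i; simp only [hz]; ring
      simp_rw [this, hxzs]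
      rw [Finset.sum_add_distrib, Finset.sum_add_distrib, ← Finset.mul_sum, hzsN]
      simp [← hXdef, ← Finset.mul_sum]
    have hAz : ‖toE (A.mulVec z)‖ ^ 2 = t ^ 2 * P + 2 * t * θ + Q := by
      have hze : z = t • x + zs := rfl
      have h1 : toE (A.mulVec z) = t • toE (A.mulVec x) + toE (A.mulVec zs) := by
        rw [hze, Matrix.mulVec_add, Matrix.mulVec_smul]; simp [toE, WithLp.toLp_add, WithLp.toLp_smul]
      rw [h1, norm_add_sq_real, norm_smul, real_inner_smul_left, real_inner_comm]
      rw [hPdef, hθdef, hQdef, Real.norm_eq_abs, mul_pow, sq_abs]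
      ring
    have := hRIP z hzsp
    rw [hnin, hAz] at this
    exact this
  clear_value X P Q θ zs α β
  -- discriminant bounds
  have hθ1 : θ ^ 2 ≤ (P - (1 - δ) * X) * (Q - (1 - δ) * N) := by
    have hf : ∀ t : ℝ, 0 ≤ (P - (1 - δ) * X) * (t * t) + (2 * θ) * t + (Q - (1 - δ) * N) := by
      intro t
      have := (hquad t).1
      linarith [this]
    have := discrim_le_zero hf
    rw [discrim] at this
    linarith [this]
  have hθ2 : θ ^ 2 ≤ ((1 + δ) * X - P) * ((1 + δ) * N - Q) := by
    have hf : ∀ t : ℝ, 0 ≤ ((1 + δ) * X - P) * (t * t) + (-(2 * θ)) * t + ((1 + δ) * N - Q) := by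
      intro t
      have := (hquad t).2
      linarith [this]
    have := discrim_le_zero hf
    rw [discrim] at this
    linarith [this]
  -- bound on P via Cauchy-Schwarz
  have hsup : ∀ i ∈ T, |C i| ≤ α := by
    intro i hi; rw [hα]; exact Finset.le_sup' (fun i => |C i|) hi
  have hα0 : 0 ≤ α := by
    obtain ⟨i₀, hi₀⟩ := hTne
    exact le_trans (abs_nonneg (C i₀)) (hsup i₀ hi₀)
  have hP0 : 0 ≤ P := by rw [hPdef]; positivity
  have hPsum : P = ∑ i ∈ T, x i * C i := by
    rw [hPdef, ← real_inner_self_eq_norm_sq, mulVec_inner]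
    simp_rw [← hCi]
    rw [← Finset.sum_subset (Finset.subset_univ T) (fun i _ hi => ?_)]
    have hx0 : x i = 0 := by
      by_contra h; exact hi ((hT i).mpr h)
    simp [hx0]
  have hPL : P ≤ α * ∑ i ∈ T, |x i| := by
    rw [hPsum, Finset.mul_sum]
    refine Finset.sum_le_sum fun i hi => ?_
    calc x i * C i ≤ |x i * C i| := le_abs_self _
      _ = |x i| * |C i| := abs_mul _ _
      _ ≤ |x i| * α := mul_le_mul_of_nonneg_left (hsup i hi) (abs_nonneg _)
      _ = α * |x i| := mul_comm _ _
  have hCS : (∑ i ∈ T, |x i|) ^ 2 ≤ (T.card : ℝ) * ∑ i ∈ T, x i ^ 2 := by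
    have := Finset.sum_mul_sq_le_sq_mul_sq T (fun _ => (1:ℝ)) (fun i => |x i|)
    simp only [one_mul, one_pow] at this
    calc (∑ i ∈ T, |x i|) ^ 2 ≤ (∑ _i ∈ T, (1:ℝ)) * ∑ i ∈ T, |x i| ^ 2 := this
      _ = (T.card : ℝ) * ∑ i ∈ T, x i ^ 2 := by
          rw [Finset.sum_const]
          simp [sq_abs]
  have hsumsq : ∑ i ∈ T, x i ^ 2 ≤ X := by
    rw [hXdef]
    exact Finset.sum_le_sum_of_subset_of_nonneg (Finset.subset_univ T)
      (fun i _ _ => sq_nonneg (x i))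
  have hP2 : P ^ 2 ≤ (K:ℝ) * X * α ^ 2 := by
    have hL0 : 0 ≤ ∑ i ∈ T, |x i| := Finset.sum_nonneg fun i _ => abs_nonneg _
    have hTKr : (T.card : ℝ) ≤ (K : ℝ) := by exact_mod_cast hTK
    have h1 : P ^ 2 ≤ (α * ∑ i ∈ T, |x i|) ^ 2 := pow_le_pow_left₀ hP0 hPL 2
    have h2 : (∑ i ∈ T, |x i|) ^ 2 ≤ (K:ℝ) * X := by
      calc (∑ i ∈ T, |x i|) ^ 2 ≤ (T.card : ℝ) * ∑ i ∈ T, x i ^ 2 := hCS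
        _ ≤ (K:ℝ) * X := by
            have h3 : (0:ℝ) ≤ ∑ i ∈ T, x i ^ 2 := Finset.sum_nonneg fun i _ => sq_nonneg _
            nlinarith [hsumsq, hTKr, h3, hKr]
    nlinarith [h1, h2, sq_nonneg α]
  -- θ ≥ N α
  have hθα : (N:ℝ) * α ≤ θ :=
    le_trans (mul_le_mul_of_nonneg_left hcon (Nat.cast_nonneg N)) hθβ
  have hθ0 : 0 ≤ θ := le_trans (mul_nonneg (Nat.cast_nonneg N) hα0) hθα
  -- final contradiction
  have ha1 : 0 ≤ P - (1 - δ) * X := by linarith [hRx.1]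
  have ha2 : 0 ≤ (1 + δ) * X - P := by linarith [hRx.2]
  have hd1 : 0 ≤ Q - (1 - δ) * N := by linarith [hRzs.1]
  have hd2 : 0 ≤ (1 + δ) * N - Q := by linarith [hRzs.2]
  have hθ2N : (N:ℝ) ^ 2 * α ^ 2 ≤ θ ^ 2 := by
    have h := pow_le_pow_left₀ (mul_nonneg (Nat.cast_nonneg N) hα0) hθα 2
    calc (N:ℝ) ^ 2 * α ^ 2 = ((N:ℝ) * α) ^ 2 := by ring
      _ ≤ θ ^ 2 := h
  exact gomp_final_arith (K:ℝ) (N:ℝ) X P Q θ α δ (by exact_mod_cast hK)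
    (by exact_mod_cast hN) hX hδ0 hδKN hθ1 hθ2 ha1 ha2 hd1 hd2 hα0 hP2 hθ2N
end

section
/- Let A be an m×n real matrix, K ≥ 1 an integer, T, Λ ⊆ {1,…,n} index sets with |T| ≤ K and T nonempty, and let ω ∈ ℝⁿ be a vector whose support is contained in T ∪ Λ and which satisfies ⟨Aeⱼ, Aω⟩ = 0 for every j ∈ Λ. Then ‖Aω‖₂² ≤ √K · ‖ω‖₂ · max_{i∈T} |⟨Aeᵢ, Aω⟩|. -/
open scoped InnerProductSpace BigOperators

/-- If `ω` is supported in `T ∪ Λ`, with `T` nonempty, `|T| ≤ K`, and `Aω` is orthogonal to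
the columns of `A` indexed by `Λ`, then `‖Aω‖₂² ≤ √K ‖ω‖₂ max_{i∈T} |⟨Aeᵢ, Aω⟩|`. -/
theorem stmt5 {m n : ℕ} (A : Matrix (Fin m) (Fin n) ℝ) (K : ℕ) (hK : 1 ≤ K)
    (T Λ : Finset (Fin n)) (hTne : T.Nonempty) (hTK : T.card ≤ K)
    (ω : Fin n → ℝ) (hsupp : ∀ i, ω i ≠ 0 → i ∈ T ∪ Λ)
    (horth : ∀ j ∈ Λ, ⟪col A j, toE (A.mulVec ω)⟫_ℝ = 0) :
    ‖toE (A.mulVec ω)‖ ^ 2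
      ≤ Real.sqrt K * ‖toE ω‖ *
        T.sup' hTne (fun i => |⟪col A i, toE (A.mulVec ω)⟫_ℝ|) := by
  set c : Fin n → ℝ := fun j => ⟪col A j, toE (A.mulVec ω)⟫_ℝ with hc
  set M : ℝ := T.sup' hTne (fun i => |c i|) with hM
  have hMnonneg : 0 ≤ M := le_trans (abs_nonneg (c hTne.choose)) (Finset.le_sup' (fun i => |c i|) hTne.choose_spec)
  -- Step 1: ‖Aω‖² = ∑_j ω j * c j
  have h1 : ‖toE (A.mulVec ω)‖ ^ 2 = ∑ j, ω j * c j := by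
    rw [← real_inner_self_eq_norm_sq]
    simp only [hc, PiLp.inner_apply, toE, col, PiLp.toLp_apply, RCLike.inner_apply, conj_trivial,
      Matrix.mulVec, dotProduct, Finset.sum_mul, Finset.mul_sum]
    rw [Finset.sum_comm]
    refine Finset.sum_congr rfl fun j _ => Finset.sum_congr rfl fun i _ =>
      Finset.sum_congr rfl fun x _ => ?_
    ring
  -- Step 2: restrict to T
  have h2 : ∑ j, ω j * c j = ∑ j ∈ T, ω j * c j := by
    symm
    apply Finset.sum_subset (Finset.subset_univ T)
    intro j _ hjT
    by_cases hω : ω j = 0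
    · simp [hω]
    · have := hsupp j hω
      rw [Finset.mem_union] at this
      rcases this with h | h
      · exact absurd h hjT
      · have hcj : c j = 0 := horth j h
        rw [hcj, mul_zero]
  have h3 : ∑ j ∈ T, ω j * c j ≤ M * ∑ j ∈ T, |ω j| := by
    rw [Finset.mul_sum]
    refine Finset.sum_le_sum fun j hj => ?_
    calc ω j * c j ≤ |ω j * c j| := le_abs_self _
      _ = |c j| * |ω j| := by rw [abs_mul, mul_comm]
      _ ≤ M * |ω j| := by
          exact mul_le_mul_of_nonneg_right (Finset.le_sup' (fun i => |c i|) hj) (abs_nonneg _)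
  -- Cauchy-Schwarz: ∑_{T} |ω j| ≤ √(card T) * ‖ω‖
  have hnorm : ‖toE ω‖ = Real.sqrt (∑ j, ω j ^ 2) := by
    simp [toE, EuclideanSpace.norm_eq, Real.norm_eq_abs, sq_abs]
  have h4 : ∑ j ∈ T, |ω j| ≤ Real.sqrt K * ‖toE ω‖ := by
    have hcs := Finset.sum_mul_sq_le_sq_mul_sq T (fun j => (1 : ℝ)) (fun j => |ω j|)
    simp only [one_mul, one_pow, Finset.sum_const, nsmul_eq_mul, mul_one, sq_abs] at hcs
    have hsum : (0:ℝ) ≤ ∑ j ∈ T, |ω j| := Finset.sum_nonneg fun j _ => abs_nonneg _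
    have := Real.sqrt_le_sqrt hcs
    rw [Real.sqrt_sq hsum, Real.sqrt_mul (by positivity)] at this
    refine this.trans ?_
    rw [hnorm]
    apply mul_le_mul
    · exact Real.sqrt_le_sqrt (by exact_mod_cast hTK)
    · exact Real.sqrt_le_sqrt (Finset.sum_le_sum_of_subset_of_nonneg
        (Finset.subset_univ T) (fun j _ _ => sq_nonneg _))
    · positivity
    · positivity
  calc ‖toE (A.mulVec ω)‖ ^ 2 = ∑ j ∈ T, ω j * c j := by rw [h1, h2]
    _ ≤ M * ∑ j ∈ T, |ω j| := h3
    _ ≤ M * (Real.sqrt K * ‖toE ω‖) := mul_le_mul_of_nonneg_left h4 hMnonneg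
    _ = Real.sqrt K * ‖toE ω‖ * M := by ring
end

section
/- Let K, N ≥ 1 be integers and let A be an m×n real matrix satisfying the restricted isometry property of order NK+1 with constant δ, where δ < 1/√(K/N + 1). Let x ∈ ℝⁿ be a vector whose support T satisfies |T| ≤ K, and let Λ ⊆ {1,…,n} be an index set such that T \ Λ ≠ ∅ and |T ∪ Λ| + N ≤ NK + 1. Let P_Λ denote the orthogonal projection of ℝᵐ onto the span of the columns {Aeⱼ : j ∈ Λ}, and set r = Ax − P_Λ(Ax). Then for every set W ⊆ {1,…,n} with |W| = N and W ∩ (T ∪ Λ) = ∅, one has max_{i∈T\Λ} |⟨Aeᵢ, r⟩| > min_{i∈W} |⟨Aeᵢ, r⟩|. (Consequently, if the generalized orthogonal matching pursuit has selected at least one correct index in each of its first k < K iterations, it selects at least one correct index in the (k+1)-th iteration.) -/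
open scoped InnerProductSpace BigOperators

/-- Orthogonal projection of `ℝᵐ` onto the span of the columns of `A` indexed by `Λ`. -/
noncomputable def projSpan {m n : ℕ} (A : Matrix (Fin m) (Fin n) ℝ) (Λ : Finset (Fin n))
    (v : EuclideanSpace ℝ (Fin m)) : EuclideanSpace ℝ (Fin m) :=
  Submodule.orthogonalProjectionOnto (Submodule.span ℝ ((fun j => col A j) '' (Λ : Set (Fin n)))) v

lemma toE_mulVec {m n : ℕ} (A : Matrix (Fin m) (Fin n) ℝ) (z : Fin n → ℝ) :
    toE (A.mulVec z) = ∑ j, z j • col A j := by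
  ext i
  rw [show toE (A.mulVec z) i = ∑ x : Fin n, A i x * z x by
    simp [toE, Matrix.mulVec, dotProduct], WithLp.ofLp_sum, Finset.sum_apply]
  simp [col, mul_comm]

lemma inner_toE_s6 {n : ℕ} (y z : Fin n → ℝ) : ⟪toE y, toE z⟫_ℝ = ∑ i, y i * z i := by
  simp [toE, PiLp.inner_apply, mul_comm]

lemma sparsity_le {n : ℕ} (z : Fin n → ℝ) (F : Finset (Fin n)) (h : ∀ i, z i ≠ 0 → i ∈ F) :
    sparsity z ≤ F.card := by
  apply Finset.card_le_card
  intro i hi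
  simp only [Finset.mem_filter] at hi
  exact h i hi.2

lemma mem_span_of_support {m n : ℕ} (A : Matrix (Fin m) (Fin n) ℝ) (Λ : Finset (Fin n))
    (z : Fin n → ℝ) (h : ∀ j ∉ Λ, z j = 0) :
    toE (A.mulVec z) ∈ Submodule.span ℝ ((fun j => col A j) '' (Λ : Set (Fin n))) := by
  rw [toE_mulVec]
  rw [← Finset.sum_subset (Finset.subset_univ Λ) (by intro j _ hj; rw [h j hj, zero_smul])]
  exact Submodule.sum_mem _ (fun j hj => Submodule.smul_mem _ _
    (Submodule.subset_span ⟨j, hj, rfl⟩))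

lemma exists_preimage {m n : ℕ} (A : Matrix (Fin m) (Fin n) ℝ) (Λ : Finset (Fin n))
    (v : EuclideanSpace ℝ (Fin m))
    (hv : v ∈ Submodule.span ℝ ((fun j => col A j) '' (Λ : Set (Fin n)))) :
    ∃ c : Fin n → ℝ, (∀ j ∉ Λ, c j = 0) ∧ toE (A.mulVec c) = v := by
  rw [Finsupp.mem_span_image_iff_linearCombination] at hv
  obtain ⟨l, hl, hlv⟩ := hv
  refine ⟨fun j => l j, fun j hj => ?_, ?_⟩
  · by_contra h
    exact hj (hl (Finsupp.mem_support_iff.2 h))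
  · rw [toE_mulVec]
    rw [← hlv, Finsupp.linearCombination_apply, Finsupp.sum]
    rw [← Finset.sum_subset (Finset.subset_univ l.support)
      (by intro j _ hj; rw [Finsupp.notMem_support_iff.1 hj, zero_smul])]

lemma projSpan_mem {m n : ℕ} (A : Matrix (Fin m) (Fin n) ℝ) (Λ : Finset (Fin n))
    (v : EuclideanSpace ℝ (Fin m)) :
    projSpan A Λ v ∈ Submodule.span ℝ ((fun j => col A j) '' (Λ : Set (Fin n))) :=
  SetLike.coe_mem (Submodule.orthogonalProjectionOnto _ v)

lemma inner_residual_eq_zero {m n : ℕ} (A : Matrix (Fin m) (Fin n) ℝ) (Λ : Finset (Fin n))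
    (v s : EuclideanSpace ℝ (Fin m))
    (hs : s ∈ Submodule.span ℝ ((fun j => col A j) '' (Λ : Set (Fin n)))) :
    ⟪s, v - projSpan A Λ v⟫_ℝ = 0 := by
  have h := Submodule.sub_starProjection_mem_orthogonal
    (K := Submodule.span ℝ ((fun j => col A j) '' (Λ : Set (Fin n)))) v
  exact (Submodule.mem_orthogonal _ _).1 h s hs

lemma projSpan_eq_self {m n : ℕ} (A : Matrix (Fin m) (Fin n) ℝ) (Λ : Finset (Fin n))
    (v : EuclideanSpace ℝ (Fin m))
    (hv : v ∈ Submodule.span ℝ ((fun j => col A j) '' (Λ : Set (Fin n)))) :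
    projSpan A Λ v = v :=
  Submodule.starProjection_eq_self_iff.2 hv

lemma projSpan_add {m n : ℕ} (A : Matrix (Fin m) (Fin n) ℝ) (Λ : Finset (Fin n))
    (v w : EuclideanSpace ℝ (Fin m)) :
    projSpan A Λ (v + w) = projSpan A Λ v + projSpan A Λ w := by
  unfold projSpan; rw [map_add]; rfl

lemma projSpan_smul {m n : ℕ} (A : Matrix (Fin m) (Fin n) ℝ) (Λ : Finset (Fin n))
    (c : ℝ) (v : EuclideanSpace ℝ (Fin m)) :
    projSpan A Λ (c • v) = c • projSpan A Λ v := by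
  unfold projSpan; rw [map_smul]; rfl

lemma norm_residual_le {m n : ℕ} (A : Matrix (Fin m) (Fin n) ℝ) (Λ : Finset (Fin n))
    (v : EuclideanSpace ℝ (Fin m)) :
    ‖v - projSpan A Λ v‖ ^ 2 ≤ ‖v‖ ^ 2 := by
  have h1 : ⟪projSpan A Λ v, v - projSpan A Λ v⟫_ℝ = 0 :=
    inner_residual_eq_zero A Λ v _ (projSpan_mem A Λ v)
  have h2 : ‖v‖ ^ 2 = ‖projSpan A Λ v‖ ^ 2 + ‖v - projSpan A Λ v‖ ^ 2 := by
    have := norm_add_sq_real (projSpan A Λ v) (v - projSpan A Λ v)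
    rw [h1] at this
    simpa using this
  nlinarith [sq_nonneg ‖projSpan A Λ v‖]

lemma expand_norm_comb {m : ℕ} (c d : ℝ) (X Y : EuclideanSpace ℝ (Fin m)) :
    ‖c • X + d • Y‖ ^ 2 = c^2 * ‖X‖^2 + 2*c*d*⟪X, Y⟫_ℝ + d^2 * ‖Y‖^2 := by
  rw [← real_inner_self_eq_norm_sq, ← real_inner_self_eq_norm_sq, ← real_inner_self_eq_norm_sq]
  rw [real_inner_add_add_self]
  simp only [real_inner_smul_left, real_inner_smul_right]
  ring


set_option maxHeartbeats 2000000 in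
/-- Theorem 2 of Chen–Ge (non-initial iterations of gOMP succeed): if `A` satisfies the RIP
of order `NK+1` with constant `δ < 1/√(K/N + 1)`, `x` has support `T` with `|T| ≤ K`,
`T \ Λ ≠ ∅`, `|T ∪ Λ| + N ≤ NK + 1`, and `W` has size `N` and is disjoint from `T ∪ Λ`,
then for the residual `r = Ax − P_Λ(Ax)`,
`max_{i∈T\Λ} |⟨Aeᵢ, r⟩| > min_{i∈W} |⟨Aeᵢ, r⟩|`. -/
theorem stmt6 {m n : ℕ} (K N : ℕ) (hK : 1 ≤ K) (hN : 1 ≤ N)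
    (A : Matrix (Fin m) (Fin n) ℝ) (δ : ℝ)
    (hδ : δ < 1 / Real.sqrt ((K : ℝ) / N + 1))
    (hRIP : RIP A (N * K + 1) δ)
    (x : Fin n → ℝ) (T : Finset (Fin n)) (hT : ∀ i, i ∈ T ↔ x i ≠ 0) (hTK : T.card ≤ K)
    (Λ : Finset (Fin n)) (hTΛ : (T \ Λ).Nonempty)
    (hcard : (T ∪ Λ).card + N ≤ N * K + 1)
    (W : Finset (Fin n)) (hWcard : W.card = N) (hWne : W.Nonempty)
    (hWdis : Disjoint W (T ∪ Λ)) :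
    W.inf' hWne (fun i =>
        |⟪col A i, toE (A.mulVec x) - projSpan A Λ (toE (A.mulVec x))⟫_ℝ|)
      < (T \ Λ).sup' hTΛ (fun i =>
        |⟪col A i, toE (A.mulVec x) - projSpan A Λ (toE (A.mulVec x))⟫_ℝ|) := by
  classical
  by_contra hcon
  push_neg at hcon
  set r : EuclideanSpace ℝ (Fin m) := toE (A.mulVec x) - projSpan A Λ (toE (A.mulVec x))
    with hr_def
  set α : ℝ := (T \ Λ).sup' hTΛ (fun i => |⟪col A i, r⟫_ℝ|) with hα_def
  set β : ℝ := W.inf' hWne (fun i => |⟪col A i, r⟫_ℝ|) with hβ_def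
  -- basic numbers
  have hN0 : (0:ℝ) < N := by exact_mod_cast hN
  have hδ1 : δ < 1 := by
    have h1 : (1:ℝ) ≤ Real.sqrt ((K : ℝ) / N + 1) := by
      have h0 : (0:ℝ) ≤ (K:ℝ)/N := by positivity
      have := Real.sqrt_le_sqrt (show (1:ℝ) ≤ (K:ℝ)/N + 1 by linarith)
      rwa [Real.sqrt_one] at this
    calc δ < 1 / Real.sqrt ((K : ℝ) / N + 1) := hδ
      _ ≤ 1 := by
        rw [div_le_one (by linarith)]
        exact h1
  -- the key sets and vectors
  set S : Finset (Fin n) := T \ Λ with hS_def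
  set u : Fin n → ℝ := fun j => if j ∈ S then x j else 0 with hu_def
  set w : Fin n → ℝ := fun j => if j ∈ W then (if 0 ≤ ⟪col A j, r⟫_ℝ then (1:ℝ) else -1) else 0
    with hw_def
  set a : ℝ := ‖toE u‖ with ha_def
  have hkR_def : ∃ kR : ℝ, kR = (S.card : ℝ) := ⟨_, rfl⟩
  obtain ⟨kR, hkR_def⟩ := hkR_def
  have hSsubT : S ⊆ T := Finset.sdiff_subset
  have hSΛ : Disjoint S Λ := Finset.sdiff_disjoint
  have hSW : Disjoint S W := by
    exact Finset.disjoint_left.2 fun i hi hiW =>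
      (Finset.disjoint_left.1 hWdis hiW) (Finset.mem_union_left _ (hSsubT hi))
  have hWΛ : Disjoint W Λ := Finset.disjoint_of_subset_right Finset.subset_union_right hWdis
  -- r in terms of u
  have h_ru : r = toE (A.mulVec u) - projSpan A Λ (toE (A.mulVec u)) := by
    have hx : x = u + (x - u) := by ring
    have hsupp : ∀ j ∉ Λ, (x - u) j = 0 := by
      intro j hj
      by_cases hjT : j ∈ T
      · have : j ∈ S := Finset.mem_sdiff.2 ⟨hjT, hj⟩
        simp [hu_def, this, Pi.sub_apply]
      · have hx0 : x j = 0 := by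
          by_contra h; exact hjT ((hT j).2 h)
        have : j ∉ S := fun h => hjT (hSsubT h)
        simp [hu_def, this, Pi.sub_apply, hx0]
    have hmem := mem_span_of_support A Λ (x - u) hsupp
    have hsplit : toE (A.mulVec x) = toE (A.mulVec u) + toE (A.mulVec (x - u)) := by
      have h2 : A.mulVec x = A.mulVec u + A.mulVec (x - u) := by
        rw [← Matrix.mulVec_add]
        congr 1
      rw [h2]
      simp only [toE, WithLp.toLp_add]
    rw [hr_def, hsplit, projSpan_add, projSpan_eq_self A Λ _ hmem]
    abel
  -- orthogonality of the residual
  have h_orth : ∀ s ∈ Submodule.span ℝ ((fun j => col A j) '' (Λ : Set (Fin n))),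
      ⟪s, r⟫_ℝ = 0 := by
    intro s hs
    rw [hr_def]
    exact inner_residual_eq_zero A Λ _ s hs
  -- inner products with images of vectors
  have h_inner_mulVec : ∀ z : Fin n → ℝ,
      ⟪toE (A.mulVec z), r⟫_ℝ = ∑ j, z j * ⟪col A j, r⟫_ℝ := by
    intro z
    rw [toE_mulVec, sum_inner]
    exact Finset.sum_congr rfl fun j _ => real_inner_smul_left _ _ _
  -- ρ = ‖r‖²
  have h_rho : ‖r‖^2 = ⟪toE (A.mulVec u), r⟫_ℝ := by
    have h1 : ⟪projSpan A Λ (toE (A.mulVec u)), r⟫_ℝ = 0 :=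
      h_orth _ (projSpan_mem A Λ _)
    rw [← real_inner_self_eq_norm_sq]
    nth_rewrite 1 [h_ru]
    rw [inner_sub_left, h1, sub_zero]
  -- a > 0
  obtain ⟨i₀, hi₀⟩ := hTΛ
  have ha_pos : 0 < a := by
    rw [ha_def, norm_pos_iff]
    intro h0
    have : u i₀ = 0 := by
      have := congrArg (· i₀) h0
      simpa [toE] using this
    rw [hu_def] at this
    simp only [hS_def, hi₀, if_pos, show i₀ ∈ T \ Λ from hi₀] at this
    exact (hT i₀).1 (Finset.mem_sdiff.1 hi₀).1 this
  have hα_nonneg : 0 ≤ α := by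
    rw [hα_def]
    exact le_trans (abs_nonneg _) (Finset.le_sup' (fun i => |⟪col A i, r⟫_ℝ|) hi₀)
  -- sum of squares of u
  have h_sumu : ∑ j, u j ^ 2 = a ^ 2 := by
    have h2 : ∑ j, u j ^ 2 = ∑ j, u j * u j := by
      exact Finset.sum_congr rfl (fun j _ => sq (u j))
    rw [h2, ← inner_toE_s6 u u, real_inner_self_eq_norm_sq, ha_def]
  -- ∑_{S} |u| ≤ √k a
  have h_sum_abs_u : ∑ j ∈ S, |u j| ≤ Real.sqrt kR * a := by
    have h1 : (∑ j ∈ S, |u j|) ^ 2 ≤ kR * ∑ j ∈ S, |u j| ^ 2 := by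
      have h0 := sq_sum_le_card_mul_sum_sq (s := S) (f := fun j => |u j|)
      rw [hkR_def]
      exact_mod_cast h0
    have h2 : ∑ j ∈ S, |u j| ^ 2 = a ^ 2 := by
      rw [← h_sumu]
      rw [← Finset.sum_subset (Finset.subset_univ S)
        (by intro j _ hj; simp [hu_def, hj])]
      exact Finset.sum_congr rfl (fun j _ => sq_abs _)
    have h3 : ∑ j ∈ S, |u j| = Real.sqrt ((∑ j ∈ S, |u j|) ^ 2) :=
      (Real.sqrt_sq (Finset.sum_nonneg fun j _ => abs_nonneg _)).symm
    rw [h3]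
    calc Real.sqrt ((∑ j ∈ S, |u j|) ^ 2) ≤ Real.sqrt (kR * a ^ 2) := by
          apply Real.sqrt_le_sqrt; rw [← h2]; exact h1
      _ = Real.sqrt kR * a := by
          rw [Real.sqrt_mul (x := kR) (by rw [hkR_def]; exact Nat.cast_nonneg _), Real.sqrt_sq ha_pos.le]
  -- ρ ≤ α √k a
  have h_rho_le : ‖r‖^2 ≤ α * (Real.sqrt kR * a) := by
    rw [h_rho, h_inner_mulVec]
    have h1 : ∑ j, u j * ⟪col A j, r⟫_ℝ = ∑ j ∈ S, u j * ⟪col A j, r⟫_ℝ := by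
      rw [← Finset.sum_subset (Finset.subset_univ S)
        (by intro j _ hj; simp [hu_def, hj])]
    rw [h1]
    calc ∑ j ∈ S, u j * ⟪col A j, r⟫_ℝ ≤ ∑ j ∈ S, |u j| * α := by
          apply Finset.sum_le_sum
          intro j hj
          have hjα : |⟪col A j, r⟫_ℝ| ≤ α := by
            rw [hα_def]
            exact Finset.le_sup' (fun i => |⟪col A i, r⟫_ℝ|) hj
          calc u j * ⟪col A j, r⟫_ℝ ≤ |u j * ⟪col A j, r⟫_ℝ| := le_abs_self _
            _ = |u j| * |⟪col A j, r⟫_ℝ| := abs_mul _ _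
            _ ≤ |u j| * α := mul_le_mul_of_nonneg_left hjα (abs_nonneg _)
      _ = α * ∑ j ∈ S, |u j| := by rw [← Finset.sum_mul]; ring
      _ ≤ α * (Real.sqrt kR * a) := by
          apply mul_le_mul_of_nonneg_left h_sum_abs_u hα_nonneg
  -- sum of squares of w
  have h_sumw : ∑ j, w j ^ 2 = (N : ℝ) := by
    have h1 : ∀ j, w j ^ 2 = if j ∈ W then (1:ℝ) else 0 := by
      intro j
      rw [hw_def]
      by_cases hj : j ∈ W
      · by_cases h2 : 0 ≤ ⟪col A j, r⟫_ℝ <;> simp [hj, h2]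
      · simp [hj]
    simp only [h1]
    rw [Finset.sum_ite_mem, Finset.univ_inter, Finset.sum_const, hWcard]
    simp
  -- inner product of A w with r
  have h_winner : ⟪toE (A.mulVec w), r⟫_ℝ = ∑ j ∈ W, |⟪col A j, r⟫_ℝ| := by
    rw [h_inner_mulVec]
    rw [← Finset.sum_subset (Finset.subset_univ W)
      (by intro j _ hj; simp [hw_def, hj])]
    apply Finset.sum_congr rfl
    intro j hj
    simp only [hw_def]
    by_cases h2 : 0 ≤ ⟪col A j, r⟫_ℝ
    · rw [if_pos hj, if_pos h2, one_mul, abs_of_nonneg h2]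
    · push_neg at h2
      rw [if_pos hj, if_neg (not_le.2 h2), abs_of_neg h2]
      ring
  have h_sumW_ge : (N:ℝ) * β ≤ ∑ j ∈ W, |⟪col A j, r⟫_ℝ| := by
    have h1 : ∀ j ∈ W, β ≤ |⟪col A j, r⟫_ℝ| := by
      intro j hj
      rw [hβ_def]
      exact Finset.inf'_le _ hj
    calc (N:ℝ) * β = ∑ _j ∈ W, β := by
          rw [Finset.sum_const, hWcard, nsmul_eq_mul]
      _ ≤ ∑ j ∈ W, |⟪col A j, r⟫_ℝ| := Finset.sum_le_sum h1
  -- disjoint supports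
  have h_uw : ∀ j, u j * w j = 0 := by
    intro j
    by_cases hj : j ∈ S
    · have hjW : j ∉ W := fun h => (Finset.disjoint_left.1 hSW hj) h
      simp [hw_def, hjW]
    · simp [hu_def, hj]
  -- constants
  have hkR_nonneg : 0 ≤ kR := by rw [hkR_def]; positivity
  set t : ℝ := Real.sqrt kR * a / N with ht_def
  have ht_nonneg : 0 ≤ t := by
    rw [ht_def]
    have := Real.sqrt_nonneg kR
    positivity
  have hkRN : 0 ≤ kR / N := div_nonneg hkR_nonneg hN0.le
  set μ : ℝ := Real.sqrt (kR / N + 1) with hμ_def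
  have hμ_pos : 0 < μ := Real.sqrt_pos.2 (by linarith)
  have hμsq : μ ^ 2 = kR / N + 1 := Real.sq_sqrt (by linarith)
  have ht2 : t ^ 2 * N = (μ ^ 2 - 1) * a ^ 2 := by
    rw [ht_def, hμsq]
    rw [div_pow, mul_pow, Real.sq_sqrt hkR_nonneg]
    field_simp
    ring
  have hδμ : δ * μ < 1 := by
    rcases le_or_gt δ 0 with h | h
    · exact lt_of_le_of_lt (mul_nonpos_iff.2 (Or.inr ⟨h, hμ_pos.le⟩)) one_pos
    · have hkK : kR ≤ (K:ℝ) := by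
        rw [hkR_def]
        exact_mod_cast le_trans (Finset.card_le_card hSsubT) hTK
      have hμle : μ ≤ Real.sqrt ((K:ℝ)/N + 1) := by
        apply Real.sqrt_le_sqrt
        have : kR / N ≤ (K:ℝ)/N := by gcongr
        linarith
      have hsq_pos : 0 < Real.sqrt ((K:ℝ)/N + 1) := Real.sqrt_pos.2 (by positivity)
      have h2 : δ * Real.sqrt ((K:ℝ)/N+1) < 1 := (lt_div_iff₀ hsq_pos).1 hδ
      exact lt_of_le_of_lt (mul_le_mul_of_nonneg_left hμle h.le) h2
  -- the combination vectors
  set p : Fin n → ℝ := (μ + 1) • u + (-t) • w with hp_def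
  set q : Fin n → ℝ := (μ - 1) • u + t • w with hq_def
  have hp_supp : ∀ j, p j ≠ 0 → j ∈ S ∪ W := by
    intro j hj
    by_contra h
    rw [Finset.mem_union, not_or] at h
    apply hj
    simp [hp_def, hu_def, hw_def, h.1, h.2]
  have hq_supp : ∀ j, q j ≠ 0 → j ∈ S ∪ W := by
    intro j hj
    by_contra h
    rw [Finset.mem_union, not_or] at h
    apply hj
    simp [hq_def, hu_def, hw_def, h.1, h.2]
  have hSTΛ : S.card ≤ (T ∪ Λ).card :=
    Finset.card_le_card (hSsubT.trans Finset.subset_union_left)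
  have hq_sp : sparsity q ≤ N * K + 1 := by
    refine le_trans (sparsity_le q (S ∪ W) hq_supp) ?_
    calc (S ∪ W).card ≤ S.card + W.card := Finset.card_union_le _ _
      _ ≤ (T ∪ Λ).card + N := by
          rw [hWcard]
          exact Nat.add_le_add_right hSTΛ N
      _ ≤ N * K + 1 := hcard
  -- RIP bounds
  have h_upper : ‖toE (A.mulVec q) - projSpan A Λ (toE (A.mulVec q))‖^2
      ≤ (1+δ) * ‖toE q‖^2 :=
    le_trans (norm_residual_le A Λ _) (hRIP q hq_sp).2
  have h_lower : (1-δ) * ‖toE p‖^2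
      ≤ ‖toE (A.mulVec p) - projSpan A Λ (toE (A.mulVec p))‖^2 := by
    obtain ⟨c, hc_supp, hc_eq⟩ := exists_preimage A Λ _ (projSpan_mem A Λ (toE (A.mulVec p)))
    have h1 : toE (A.mulVec p) - projSpan A Λ (toE (A.mulVec p)) = toE (A.mulVec (p - c)) := by
      rw [← hc_eq, Matrix.mulVec_sub]
      simp only [toE, WithLp.toLp_sub]
    rw [h1]
    have hpc_supp : ∀ j, (p - c) j ≠ 0 → j ∈ (S ∪ Λ) ∪ W := by
      intro j hj
      by_contra h
      rw [Finset.mem_union, Finset.mem_union, not_or, not_or] at h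
      apply hj
      have hpj : p j = 0 := by
        by_contra hp0
        rcases Finset.mem_union.1 (hp_supp j hp0) with h' | h'
        · exact h.1.1 h'
        · exact h.2 h'
      simp [Pi.sub_apply, hpj, hc_supp j h.1.2]
    have hsp : sparsity (p - c) ≤ N * K + 1 := by
      refine le_trans (sparsity_le _ _ hpc_supp) ?_
      have hSL : S ∪ Λ = T ∪ Λ := Finset.sdiff_union_self_eq_union
      calc ((S ∪ Λ) ∪ W).card ≤ (S ∪ Λ).card + W.card := Finset.card_union_le _ _
        _ = (T ∪ Λ).card + N := by rw [hSL, hWcard]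
        _ ≤ N * K + 1 := hcard
    refine le_trans ?_ (hRIP (p - c) hsp).1
    apply mul_le_mul_of_nonneg_left ?_ (by linarith : (0:ℝ) ≤ 1 - δ)
    rw [← real_inner_self_eq_norm_sq, ← real_inner_self_eq_norm_sq, inner_toE_s6, inner_toE_s6]
    apply Finset.sum_le_sum
    intro j _
    have hpc : p j * c j = 0 := by
      by_cases hj : j ∈ Λ
      · have hjS : j ∉ S := Finset.disjoint_right.1 hSΛ hj
        have hjW : j ∉ W := Finset.disjoint_right.1 hWΛ hj
        have : p j = 0 := by simp [hp_def, hu_def, hw_def, hjS, hjW]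
        rw [this, zero_mul]
      · rw [hc_supp j hj, mul_zero]
    have h5 : (p - c) j = p j - c j := rfl
    have h6 : (p j - c j) * (p j - c j) = p j * p j + c j * c j - 2 * (p j * c j) := by ring
    rw [h5, h6, hpc]
    linarith [mul_self_nonneg (c j)]
  -- norms of p and q
  have h_norm_p : ‖toE p‖^2 = (μ+1)^2 * a^2 + t^2 * N := by
    rw [← real_inner_self_eq_norm_sq, inner_toE_s6]
    have h1 : ∀ j, p j * p j = (μ+1)^2 * (u j)^2 + t^2 * (w j)^2 := by
      intro j
      have hp : p j = (μ+1) * u j + (-t) * w j := rfl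
      rw [hp]
      linear_combination (-(2*(μ+1)*t)) * h_uw j
    simp only [h1]
    rw [Finset.sum_add_distrib, ← Finset.mul_sum, ← Finset.mul_sum, h_sumu, h_sumw]
  have h_norm_q : ‖toE q‖^2 = (μ-1)^2 * a^2 + t^2 * N := by
    rw [← real_inner_self_eq_norm_sq, inner_toE_s6]
    have h1 : ∀ j, q j * q j = (μ-1)^2 * (u j)^2 + t^2 * (w j)^2 := by
      intro j
      have hq : q j = (μ-1) * u j + t * w j := rfl
      rw [hq]
      linear_combination (2*(μ-1)*t) * h_uw j
    simp only [h1]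
    rw [Finset.sum_add_distrib, ← Finset.mul_sum, ← Finset.mul_sum, h_sumu, h_sumw]
  -- linearity of the residual map
  set G : EuclideanSpace ℝ (Fin m) :=
    toE (A.mulVec w) - projSpan A Λ (toE (A.mulVec w)) with hG_def
  have hB_comb : ∀ (c d : ℝ) (y z : Fin n → ℝ),
      toE (A.mulVec (c • y + d • z)) - projSpan A Λ (toE (A.mulVec (c • y + d • z)))
      = c • (toE (A.mulVec y) - projSpan A Λ (toE (A.mulVec y)))
        + d • (toE (A.mulVec z) - projSpan A Λ (toE (A.mulVec z))) := by
    intro c d y z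
    have h1 : A.mulVec (c • y + d • z) = c • A.mulVec y + d • A.mulVec z := by
      rw [Matrix.mulVec_add, Matrix.mulVec_smul, Matrix.mulVec_smul]
    have h2 : toE (c • A.mulVec y + d • A.mulVec z)
        = c • toE (A.mulVec y) + d • toE (A.mulVec z) := by
        simp only [toE, WithLp.toLp_add, WithLp.toLp_smul]
    rw [h1, h2, projSpan_add, projSpan_smul, projSpan_smul, smul_sub, smul_sub]
    abel
  have hBp : toE (A.mulVec p) - projSpan A Λ (toE (A.mulVec p)) = (μ+1) • r + (-t) • G := by
    rw [hp_def, hB_comb, ← h_ru, ← hG_def]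
  have hBq : toE (A.mulVec q) - projSpan A Λ (toE (A.mulVec q)) = (μ-1) • r + t • G := by
    rw [hq_def, hB_comb, ← h_ru, ← hG_def]
  -- inner product with G
  have hG_inner : ⟪r, G⟫_ℝ = ∑ j ∈ W, |⟪col A j, r⟫_ℝ| := by
    rw [hG_def, inner_sub_right]
    have h0 : ⟪r, projSpan A Λ (toE (A.mulVec w))⟫_ℝ = 0 := by
      rw [real_inner_comm]
      exact h_orth _ (projSpan_mem A Λ _)
    rw [h0, sub_zero, real_inner_comm]
    exact h_winner
  -- polarization
  have h_pol : ‖(μ+1) • r + (-t) • G‖^2 - ‖(μ-1) • r + t • G‖^2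
      = 4*μ*(‖r‖^2 - t * ⟪r, G⟫_ℝ) := by
    rw [expand_norm_comb, expand_norm_comb]
    ring
  -- the contradiction
  clear_value r α β u w a t μ p q G
  have key1 : ‖r‖^2 - t * ⟪r, G⟫_ℝ ≤ 0 := by
    have h1 : (N:ℝ) * α ≤ ⟪r, G⟫_ℝ := by
      rw [hG_inner]
      have h0 : (N:ℝ) * α ≤ (N:ℝ) * β := mul_le_mul_of_nonneg_left hcon hN0.le
      exact le_trans h0 h_sumW_ge
    have h2 : t * ((N:ℝ) * α) ≤ t * ⟪r, G⟫_ℝ := mul_le_mul_of_nonneg_left h1 ht_nonneg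
    have h3 : t * ((N:ℝ) * α) = α * (Real.sqrt kR * a) := by
      have hN' : (N:ℝ) ≠ 0 := ne_of_gt hN0
      rw [ht_def, div_mul_eq_mul_div, div_eq_iff hN']
      ring
    have h7 : ‖r‖^2 ≤ t * ⟪r, G⟫_ℝ := le_trans (le_trans h_rho_le (le_of_eq h3.symm)) h2
    exact sub_nonpos.2 h7
  have key2 : (1-δ)*‖toE p‖^2 - (1+δ)*‖toE q‖^2
      ≤ 4*μ*(‖r‖^2 - t * ⟪r, G⟫_ℝ) := by
    rw [← h_pol, ← hBp, ← hBq]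
    linarith [h_upper, h_lower]
  have key3 : (1-δ)*‖toE p‖^2 - (1+δ)*‖toE q‖^2 = 4*μ*(1 - δ*μ)*a^2 := by
    rw [h_norm_p, h_norm_q]
    linear_combination (-2*δ) * ht2
  have hfinal : 4*μ*(1 - δ*μ)*a^2 ≤ 0 := by
    rw [← key3]
    calc (1-δ)*‖toE p‖^2 - (1+δ)*‖toE q‖^2 ≤ 4*μ*(‖r‖^2 - t * ⟪r, G⟫_ℝ) := key2
      _ ≤ 0 := mul_nonpos_iff.2 (Or.inl ⟨by linarith, key1⟩)
  have h4 : 0 < 4*μ := by linarith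
  have h5 : 0 < 1 - δ*μ := by linarith
  have h6 : 0 < 4*μ*(1 - δ*μ)*a^2 := mul_pos (mul_pos h4 h5) (pow_pos ha_pos 2)
  linarith
end
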